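/- Let X be a group that is residually a finite π-group and let Y be an abelian subgroup of X. Then the set of all π'-roots of elements of Y, i.e., {x ∈ X : ∃ q a π'-number, x^q ∈ Y}, is an abelian subgroup of X, and it equals the π'-isolator of Y in X (the smallest π'-isolated subgroup of X containing Y). -/

import Mathlib

open Pointwise

def IsPiNumber (π : Set ℕ) (n : ℕ) : Prop := n ≠ 0 ∧ ∀ p : ℕ, p.Prime → p ∣ n → p ∈ π

def IsPiPrimeNumber (π : Set ℕ) (n : ℕ) : Prop := n ≠ 0 ∧ ∀ p : ℕ, p.Prime → p ∣ n → p ∉ π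

/-- `N` is a normal subgroup of finite π-index, i.e. `N ∈ Ω_π(X)`. -/
def InOmega (π : Set ℕ) {X : Type*} [Group X] (N : Subgroup X) : Prop :=
  N.Normal ∧ IsPiNumber π N.index

/-- `Y` is separable by the family `F` of subgroups. -/
def SepBy {X : Type*} [Group X] (F : Set (Subgroup X)) (Y : Subgroup X) : Prop :=
  (⋂ N ∈ F, (Y : Set X) * (N : Set X)) = (Y : Set X)

/-- `Y` is 𝓕_π-separable in `X`. -/
def SepIn (π : Set ℕ) {X : Type*} [Group X] (Y : Subgroup X) : Prop :=
  SepBy {N : Subgroup X | InOmega π N} Y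

/-- `Y` is π'-isolated in `X`. -/
def Isolated (π : Set ℕ) {X : Type*} [Group X] (Y : Subgroup X) : Prop :=
  ∀ x : X, ∀ q : ℕ, IsPiPrimeNumber π q → x ^ q ∈ Y → x ∈ Y

/-- `X` is residually a finite π-group. -/
def ResiduallyPi (π : Set ℕ) (X : Type*) [Group X] : Prop :=
  ∀ x : X, x ≠ 1 → ∃ N : Subgroup X, InOmega π N ∧ x ∉ N

lemma coprime_of_pi (π : Set ℕ) {q n : ℕ} (hq : IsPiPrimeNumber π q) (hn : IsPiNumber π n) :
    Nat.Coprime q n := by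
  by_contra hg
  have hp : (Nat.gcd q n).minFac.Prime := Nat.minFac_prime hg
  have hpq : (Nat.gcd q n).minFac ∣ q := (Nat.minFac_dvd _).trans (Nat.gcd_dvd_left _ _)
  have hpn : (Nat.gcd q n).minFac ∣ n := (Nat.minFac_dvd _).trans (Nat.gcd_dvd_right _ _)
  exact hq.2 _ hp hpq (hn.2 _ hp hpn)

lemma one_is_pi_prime (π : Set ℕ) : IsPiPrimeNumber π 1 :=
  ⟨one_ne_zero, fun p hp hd _ => hp.one_lt.ne' (Nat.eq_one_of_dvd_one hd)⟩

lemma mul_is_pi_prime (π : Set ℕ) {q r : ℕ} (hq : IsPiPrimeNumber π q)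
    (hr : IsPiPrimeNumber π r) : IsPiPrimeNumber π (q * r) :=
  ⟨Nat.mul_ne_zero hq.1 hr.1, fun p hp hd => by
    rcases (Nat.Prime.dvd_mul hp).mp hd with h | h
    · exact hq.2 p hp h
    · exact hr.2 p hp h⟩

lemma root_eq_self_pow {G : Type*} [Group G] {g : G} {q n : ℕ} (hn1 : 1 < n)
    (hco : Nat.Coprime q n) (hg : g ^ n = 1) : ∃ k : ℕ, g = (g ^ q) ^ k := by
  obtain ⟨k, -, hk⟩ := Nat.exists_mul_mod_eq_one_of_coprime hco hn1
  refine ⟨k, ?_⟩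
  rw [← pow_mul, ← Nat.div_add_mod (q * k) n, hk, pow_add, pow_mul, hg, one_pow, one_mul,
    pow_one]

lemma commute_of_roots (π : Set ℕ) {X : Type*} [Group X]
    (hres : ResiduallyPi π X) (Y : Subgroup X)
    (hab : ∀ a ∈ Y, ∀ b ∈ Y, a * b = b * a)
    {a b : X} {q r : ℕ} (hq : IsPiPrimeNumber π q) (hr : IsPiPrimeNumber π r)
    (ha : a ^ q ∈ Y) (hb : b ^ r ∈ Y) : a * b = b * a := by
  by_contra h
  have h1 : a * b * (b * a)⁻¹ ≠ 1 := by
    intro h2; exact h (mul_inv_eq_one.mp h2)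
  obtain ⟨N, ⟨hN, hidx⟩, hnot⟩ := hres _ h1
  haveI := hN
  apply hnot
  rcases eq_or_lt_of_le (Nat.one_le_iff_ne_zero.mpr hidx.1) with h1n | h1n
  · have : N = ⊤ := Subgroup.index_eq_one.mp h1n.symm
    simp [this]
  set φ := QuotientGroup.mk' N with hφ
  have hpow : ∀ x : X, (φ x) ^ N.index = 1 := by
    intro x
    rw [← map_pow, QuotientGroup.mk'_apply, QuotientGroup.eq_one_iff]
    exact N.pow_index_mem x
  obtain ⟨k, hk⟩ := root_eq_self_pow h1n (coprime_of_pi π hq hidx) (hpow a)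
  obtain ⟨l, hl⟩ := root_eq_self_pow h1n (coprime_of_pi π hr hidx) (hpow b)
  have hcomm : Commute (φ (a ^ q)) (φ (b ^ r)) :=
    Commute.map (hab _ ha _ hb) φ
  have : Commute (φ a) (φ b) := by
    rw [show φ a = (φ (a^q))^k by rw [map_pow]; exact hk,
        show φ b = (φ (b^r))^l by rw [map_pow]; exact hl]
    exact (hcomm.pow_pow k l)
  have : φ (a * b * (b * a)⁻¹) = 1 := by
    rw [map_mul, map_inv, map_mul, map_mul, this.eq]
    group
  rwa [QuotientGroup.mk'_apply, QuotientGroup.eq_one_iff] at this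

/-- In a residually-(finite π) group, the set of π'-roots of an abelian subgroup `Y`
is an abelian subgroup, and it is the smallest π'-isolated subgroup containing `Y`. -/
theorem isolator_of_abelian (π : Set ℕ) {X : Type*} [Group X]
    (hres : ResiduallyPi π X) (Y : Subgroup X)
    (hab : ∀ a ∈ Y, ∀ b ∈ Y, a * b = b * a) :
    ∃ Z : Subgroup X,
      (Z : Set X) = {x : X | ∃ q : ℕ, IsPiPrimeNumber π q ∧ x ^ q ∈ Y} ∧
      (∀ a ∈ Z, ∀ b ∈ Z, a * b = b * a) ∧
      Y ≤ Z ∧ Isolated π Z ∧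
      ∀ W : Subgroup X, Y ≤ W → Isolated π W → Z ≤ W := by
  set S : Set X := {x : X | ∃ q : ℕ, IsPiPrimeNumber π q ∧ x ^ q ∈ Y} with hS
  have hcomm : ∀ a ∈ S, ∀ b ∈ S, a * b = b * a := by
    rintro a ⟨q, hq, ha⟩ b ⟨r, hr, hb⟩
    exact commute_of_roots π hres Y hab hq hr ha hb
  refine ⟨{ carrier := S
            one_mem' := ⟨1, one_is_pi_prime π, by simpa using Y.one_mem⟩
            mul_mem' := ?_
            inv_mem' := ?_ }, rfl, hcomm, ?_, ?_, ?_⟩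
  · rintro a b ⟨q, hq, ha⟩ ⟨r, hr, hb⟩
    refine ⟨q * r, mul_is_pi_prime π hq hr, ?_⟩
    have hc : Commute a b := hcomm a ⟨q, hq, ha⟩ b ⟨r, hr, hb⟩
    rw [hc.mul_pow]
    exact Y.mul_mem (by rw [pow_mul]; exact Y.pow_mem ha r)
      (by rw [mul_comm, pow_mul]; exact Y.pow_mem hb q)
  · rintro a ⟨q, hq, ha⟩
    exact ⟨q, hq, by rw [inv_pow]; exact Y.inv_mem ha⟩
  · intro y hy
    exact ⟨1, one_is_pi_prime π, by simpa using hy⟩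
  · rintro x q hq ⟨r, hr, hxr⟩
    exact ⟨q * r, mul_is_pi_prime π hq hr, by rwa [pow_mul]⟩
  · rintro W hYW hW x ⟨q, hq, hx⟩
    exact hW x q hq (hYW hx)
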